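/- For $\beta, m, \omega > 0$ and $a > 0$, $\int_{-a}^{a} \frac{2}{\sqrt{\beta}} \arctan\left(\sqrt{\beta}\, m\omega \sqrt{a^2 - x^2}\right) dx = 2\pi \frac{\sqrt{1 + \beta m^2 \omega^2 a^2} - 1}{\beta m \omega}$. -/

import Mathlib

open Real intervalIntegral Set

set_option maxHeartbeats 1000000 in
lemma gup_key (c a : ℝ) (hc : 0 < c) (ha : 0 < a) :
    ∫ x in (-a)..a, Real.arctan (c * Real.sqrt (a ^ 2 - x ^ 2))
      = Real.pi * (Real.sqrt (1 + c ^ 2 * a ^ 2) - 1) / c := by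
  set s1 : ℝ := Real.sqrt (1 + c ^ 2 * a ^ 2) with hs1def
  set F : ℝ → ℝ := fun x => x * Real.arctan (c * Real.sqrt (a ^ 2 - x ^ 2)) +
    (1 / c) * (s1 * Real.arcsin (x / Real.sqrt ((1 + c ^ 2 * a ^ 2) * a ^ 2 - c ^ 2 * a ^ 2 * x ^ 2))
      - Real.arcsin (x / a)) with hF
  have hs1pos : 0 < s1 := Real.sqrt_pos.mpr (by nlinarith)
  have hs1sq : s1 ^ 2 = 1 + c ^ 2 * a ^ 2 := Real.sq_sqrt (by nlinarith)
  have hAx : ∀ x ∈ Icc (-a) a, 0 < (1 + c ^ 2 * a ^ 2) * a ^ 2 - c ^ 2 * a ^ 2 * x ^ 2 := by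
    intro x hx
    have h1 : x ^ 2 ≤ a ^ 2 := sq_le_sq' hx.1 hx.2
    nlinarith [mul_le_mul_of_nonneg_left h1 (by positivity : (0:ℝ) ≤ c ^ 2 * a ^ 2)]
  have hcont : ContinuousOn F (Icc (-a) a) := by
    apply ContinuousOn.add
    · apply Continuous.continuousOn
      exact continuous_id.mul (Real.continuous_arctan.comp
        (continuous_const.mul (Real.continuous_sqrt.comp (by continuity))))
    · apply ContinuousOn.mul continuousOn_const
      apply ContinuousOn.sub
      · apply ContinuousOn.mul continuousOn_const
        apply Real.continuous_arcsin.comp_continuousOn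
        apply ContinuousOn.div continuousOn_id
        · exact (Real.continuous_sqrt.comp (by continuity)).continuousOn
        · intro x hx
          exact (Real.sqrt_pos.mpr (hAx x hx)).ne'
      · exact (Real.continuous_arcsin.comp (continuous_id.div_const a)).continuousOn
  have hint : IntervalIntegrable (fun x => Real.arctan (c * Real.sqrt (a ^ 2 - x ^ 2)))
      MeasureTheory.volume (-a) a := by
    apply Continuous.intervalIntegrable
    exact Real.continuous_arctan.comp (continuous_const.mul (Real.continuous_sqrt.comp (by continuity)))
  have hderiv : ∀ x ∈ Ioo (-a) a,
      HasDerivAt F (Real.arctan (c * Real.sqrt (a ^ 2 - x ^ 2))) x := by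
    intro x hx
    have hx2 : x ^ 2 < a ^ 2 := sq_lt_sq' hx.1 hx.2
    have hu : 0 < a ^ 2 - x ^ 2 := by linarith
    set s : ℝ := Real.sqrt (a ^ 2 - x ^ 2) with hsdef
    have hs : 0 < s := Real.sqrt_pos.mpr hu
    have hssq : s ^ 2 = a ^ 2 - x ^ 2 := Real.sq_sqrt hu.le
    set A : ℝ := (1 + c ^ 2 * a ^ 2) * a ^ 2 - c ^ 2 * a ^ 2 * x ^ 2 with hAdef
    have hA : 0 < A := by rw [hAdef]; nlinarith [sq_nonneg (c*a), mul_pos (mul_pos (mul_pos hc hc) (mul_pos ha ha)) hu, sq_nonneg x]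
    set sA : ℝ := Real.sqrt A with hsAdef
    have hsA : 0 < sA := Real.sqrt_pos.mpr hA
    have hsAsq : sA ^ 2 = A := Real.sq_sqrt hA.le
    have hxA : x ^ 2 < A := by rw [hAdef]; nlinarith [mul_pos (mul_pos (mul_pos hc hc) (mul_pos ha ha)) hu]
    -- derivative of a^2 - x^2
    have hd_u : HasDerivAt (fun x : ℝ => a ^ 2 - x ^ 2) (-(2 * x)) x := by
      simpa using (hasDerivAt_pow 2 x).const_sub (a ^ 2)
    have hd_s : HasDerivAt (fun x : ℝ => Real.sqrt (a ^ 2 - x ^ 2)) (-(2 * x) / (2 * s)) x :=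
      hd_u.sqrt hu.ne'
    have hd_arctan : HasDerivAt (fun x : ℝ => Real.arctan (c * Real.sqrt (a ^ 2 - x ^ 2)))
        (1 / (1 + (c * s) ^ 2) * (c * (-(2 * x) / (2 * s)))) x := (hd_s.const_mul c).arctan
    have hd_p1 : HasDerivAt (fun x : ℝ => x * Real.arctan (c * Real.sqrt (a ^ 2 - x ^ 2)))
        (1 * Real.arctan (c * s) + x * (1 / (1 + (c * s) ^ 2) * (c * (-(2 * x) / (2 * s))))) x := by
      have := (hasDerivAt_id x).mul hd_arctan
      exact this.congr_deriv (by simp [hsdef])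
    -- derivative of A
    have hd_A : HasDerivAt (fun x : ℝ => (1 + c ^ 2 * a ^ 2) * a ^ 2 - c ^ 2 * a ^ 2 * x ^ 2)
        (-(c ^ 2 * a ^ 2 * (2 * x))) x := by
      have h := ((hasDerivAt_pow 2 x).const_mul (c ^ 2 * a ^ 2)).const_sub
        ((1 + c ^ 2 * a ^ 2) * a ^ 2)
      refine h.congr_deriv ?_
      push_cast
      ring
    have hd_sA : HasDerivAt (fun x : ℝ => Real.sqrt ((1 + c ^ 2 * a ^ 2) * a ^ 2 - c ^ 2 * a ^ 2 * x ^ 2))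
        (-(c ^ 2 * a ^ 2 * (2 * x)) / (2 * sA)) x := hd_A.sqrt hA.ne'
    have hd_g : HasDerivAt (fun x : ℝ => x / Real.sqrt ((1 + c ^ 2 * a ^ 2) * a ^ 2 - c ^ 2 * a ^ 2 * x ^ 2))
        ((1 * sA - x * (-(c ^ 2 * a ^ 2 * (2 * x)) / (2 * sA))) / sA ^ 2) x :=
      (hasDerivAt_id x).div hd_sA hsA.ne'
    have hgsq : (x / sA) ^ 2 < 1 := by
      rw [div_pow, hsAsq, div_lt_one hA]; exact hxA
    have hgabs := abs_lt.mp ((sq_lt_one_iff_abs_lt_one _).mp hgsq)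
    have hd_arcsin1 := (Real.hasDerivAt_arcsin (ne_of_gt hgabs.1) (ne_of_lt hgabs.2)).comp x hd_g
    have hxa2 : |x / a| < 1 := by
      rw [abs_div, abs_of_pos ha, div_lt_one ha]
      exact abs_lt.mpr ⟨hx.1, hx.2⟩
    have hxa3 := abs_lt.mp hxa2
    have hd_g3 : HasDerivAt (fun x : ℝ => x / a) (1 / a) x := by
      simpa using (hasDerivAt_id x).div_const a
    have hd_arcsin2 := (Real.hasDerivAt_arcsin (ne_of_gt hxa3.1) (ne_of_lt hxa3.2)).comp x hd_g3
    have hd_F := hd_p1.add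
      ((((hd_arcsin1.const_mul s1).sub hd_arcsin2).const_mul (1 / c)))
    rw [hF]
    refine hd_F.congr_deriv (Eq.symm ?_)
    -- now prove the algebraic identity
    have e1 : Real.sqrt (1 - (x / sA) ^ 2) = s1 * s / sA := by
      have h : 1 - (x / sA) ^ 2 = (s1 * s / sA) ^ 2 := by
        rw [div_pow, div_pow, mul_pow, hssq, hsAsq, hs1sq, hAdef]
        have hA0 : (1 + c ^ 2 * a ^ 2) * a ^ 2 - c ^ 2 * a ^ 2 * x ^ 2 ≠ 0 := by rw [← hAdef]; exact hA.ne'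
        rw [eq_div_iff hA0, sub_mul, div_mul_cancel₀ _ hA0]
        ring
      rw [h, Real.sqrt_sq (by positivity)]
    have e2 : Real.sqrt (1 - (x / a) ^ 2) = s / a := by
      have h : 1 - (x / a) ^ 2 = (s / a) ^ 2 := by
        rw [div_pow, div_pow, hssq]
        field_simp
      rw [h, Real.sqrt_sq (by positivity)]
    simp only [Function.comp_def, ← hsAdef, ← hsdef, e1, e2]
    clear_value s sA s1 A
    clear hd_F hd_arcsin1 hd_arcsin2 hd_p1 hd_arctan hd_s hd_g hd_sA hcont hint F hF
    have hcs : (0:ℝ) < 1 + (c * s) ^ 2 := by positivity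
    have hsAsq2 : sA ^ 2 = (1 + c ^ 2 * a ^ 2) * a ^ 2 - c ^ 2 * a ^ 2 * x ^ 2 := by
      rw [hsAsq, hAdef]
    field_simp
    linear_combination (c^2*x^2) * hsAsq2 - (c^4*x^2*a^2) * hssq
  rw [intervalIntegral.integral_eq_sub_of_hasDerivAt_of_le (by linarith) hcont hderiv hint]
  have h1 : (1 + c ^ 2 * a ^ 2) * a ^ 2 - c ^ 2 * a ^ 2 * a ^ 2 = a ^ 2 := by ring
  have h2 : (1 + c ^ 2 * a ^ 2) * a ^ 2 - c ^ 2 * a ^ 2 * (-a) ^ 2 = a ^ 2 := by ring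
  have hsa : Real.sqrt (a ^ 2) = a := Real.sqrt_sq ha.le
  rw [hF]
  simp only [h1, h2, hsa, sub_self, neg_mul, neg_neg, Real.sqrt_zero, mul_zero,
    Real.arctan_zero, div_self ha.ne', neg_div, Real.arcsin_one, Real.arcsin_neg,
    zero_add, mul_neg]
  rw [show a ^ 2 - (-a : ℝ) ^ 2 = 0 by ring]
  simp only [Real.sqrt_zero, mul_zero, Real.arctan_zero, neg_zero]
  field_simp
  ring

theorem gup_oscillator_action_integral (β m ω a : ℝ) (hβ : 0 < β)
    (hm : 0 < m) (hω : 0 < ω) (ha : 0 < a) :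
    ∫ x in (-a)..a,
        (2 / Real.sqrt β) * Real.arctan (Real.sqrt β * m * ω * Real.sqrt (a ^ 2 - x ^ 2))
      = 2 * Real.pi * (Real.sqrt (1 + β * m ^ 2 * ω ^ 2 * a ^ 2) - 1) / (β * m * ω) := by
  have hsb : 0 < Real.sqrt β := Real.sqrt_pos.mpr hβ
  have hc : 0 < Real.sqrt β * m * ω := by positivity
  rw [intervalIntegral.integral_const_mul, gup_key (Real.sqrt β * m * ω) a hc ha]
  have hq : (Real.sqrt β * m * ω) ^ 2 * a ^ 2 = β * m ^ 2 * ω ^ 2 * a ^ 2 := by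
    rw [mul_pow, mul_pow, Real.sq_sqrt hβ.le]
  rw [hq]
  have hbb : Real.sqrt β * Real.sqrt β = β := Real.mul_self_sqrt hβ.le
  field_simp
  ring_nf
  rw [Real.sq_sqrt hβ.le]
  ring
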